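/- Let T be a decision tree over α and let ℓ' and ℓ be leaves with ℓ' lexicographically preceding ℓ, and let n be their lowest common ancestor (so ℓ' lies in the left subtree of n and ℓ lies in the right subtree of n). Then: (a) the path to ℓ exits n via its right child, so the negation of the test of n is one of the conjuncts of the path formula of ℓ; and (b) for every x : α, if the positive formula of ℓ' holds at x then the test of n holds at x. In particular, if the positive formula of some lexicographically earlier leaf holds at x, then the path formula of ℓ fails at x. -/
import Mathlib


/-- A decision tree over a type `α` of examples: a finite binary tree where every
internal node carries a test `Q : α → Prop` and every leaf carries a real value. -/
inductive DTree (α : Type*) where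
  | leaf (v : ℝ)
  | node (Q : α → Prop) (l r : DTree α)

namespace DTree

open Classical

variable {α : Type*}

/-- A leaf of the tree is identified by its root-to-leaf path: a list of Booleans,
`true` meaning "descend to the left child" and `false` "descend to the right child". -/
def IsLeaf : DTree α → List Bool → Prop
  | leaf _, [] => True
  | node _ l _, true :: p => IsLeaf l p
  | node _ _ r, false :: p => IsLeaf r p
  | _, _ => False

/-- The value carried by the leaf at a given path (if any). -/
def leafValue : DTree α → List Bool → Option ℝ
  | leaf v, [] => some v
  | node _ l _, true :: p => leafValue l p
  | node _ _ r, false :: p => leafValue r p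
  | _, _ => none

/-- Evaluation of the tree at `x`: starting at the root, at each internal node descend
to the left child if the node's test holds at `x` and to the right child otherwise.
`evalPath T x` is the root-to-leaf path of the leaf thus reached. -/
noncomputable def evalPath : DTree α → α → List Bool
  | leaf _, _ => []
  | node Q l r, x => if Q x then true :: evalPath l x else false :: evalPath r x

/-- The value returned by evaluating the tree at `x`. -/
noncomputable def evalTree : DTree α → α → ℝ
  | leaf v, _ => v
  | node Q l r, x => if Q x then evalTree l x else evalTree r x

/-- The path formula of the leaf at path `p`, at example `x`: the conjunction, over all
internal nodes on the root-to-leaf path, of the test at `x` when the path exits the node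
via its left child, and of the negation of the test when it exits via the right child. -/
def pathFormula : DTree α → List Bool → α → Prop
  | leaf _, [], _ => True
  | node Q l _, true :: p, x => Q x ∧ pathFormula l p x
  | node Q _ r, false :: p, x => ¬ Q x ∧ pathFormula r p x
  | _, _, _ => False

/-- The positive formula of the leaf at path `p`, at example `x`: the conjunction of the
tests at `x` of those internal nodes on the root-to-leaf path that the path exits via the
left child (the empty conjunction being `True`). -/
def posFormula : DTree α → List Bool → α → Prop
  | leaf _, [], _ => True
  | node Q l _, true :: p, x => Q x ∧ posFormula l p x
  | node _ _ r, false :: p, x => posFormula r p x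
  | _, _, _ => False

/-- The subtree rooted at the node reached by following a path from the root. -/
def subtreeAt : DTree α → List Bool → Option (DTree α)
  | t, [] => some t
  | node _ l _, true :: p => subtreeAt l p
  | node _ _ r, false :: p => subtreeAt r p
  | leaf _, _ :: _ => none

/-- The test carried by the internal node at a given path (if any). -/
def testAt (T : DTree α) (p : List Bool) : Option (α → Prop) :=
  match subtreeAt T p with
  | some (node Q _ _) => some Q
  | _ => none

/-- Leaves are ordered lexicographically: every leaf in the left subtree of an internal
node precedes every leaf in its right subtree.  Concretely, path `p` precedes path `q`
iff after some common prefix, `p` goes left where `q` goes right. -/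
def leafLT (p q : List Bool) : Prop :=
  ∃ s p' q' : List Bool, p = s ++ true :: p' ∧ q = s ++ false :: q'

/-- The tree has cumulative tests: for every internal node `n` and every strict ancestor
`m` of `n` such that the path from `m` to `n` passes through the left child of `m`,
the test of `n` at `x` implies the test of `m` at `x`, for every `x`. -/
def Cumulative (T : DTree α) : Prop :=
  ∀ (p q : List Bool) (Qm Qn : α → Prop),
    testAt T p = some Qm → testAt T (p ++ true :: q) = some Qn →
    ∀ x : α, Qn x → Qm x

theorem aux_path {α : Type*} :
    ∀ (s : List Bool) (T : DTree α) (p : List Bool) (Q : α → Prop),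
      testAt T s = some Q → ∀ x : α, pathFormula T (s ++ false :: p) x → ¬ Q x
  | [], T, p, Q, hQ, x, hpf => by
      cases T with
      | leaf v => simp [testAt, subtreeAt] at hQ
      | node Q' l r =>
        simp only [testAt, subtreeAt, Option.some.injEq] at hQ
        subst hQ
        exact hpf.1
  | (b :: s), T, p, Q, hQ, x, hpf => by
      cases T with
      | leaf v => simp [testAt, subtreeAt] at hQ
      | node Q' l r =>
        cases b with
        | true => exact aux_path s l p Q hQ x hpf.2
        | false => exact aux_path s r p Q hQ x hpf.2

theorem aux_pos {α : Type*} :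
    ∀ (s : List Bool) (T : DTree α) (p' : List Bool) (Q : α → Prop),
      testAt T s = some Q → ∀ x : α, posFormula T (s ++ true :: p') x → Q x
  | [], T, p', Q, hQ, x, hpf => by
      cases T with
      | leaf v => simp [testAt, subtreeAt] at hQ
      | node Q' l r =>
        simp only [testAt, subtreeAt, Option.some.injEq] at hQ
        subst hQ
        exact hpf.1
  | (b :: s), T, p', Q, hQ, x, hpf => by
      cases T with
      | leaf v => simp [testAt, subtreeAt] at hQ
      | node Q' l r =>
        cases b with
        | true => exact aux_pos s l p' Q hQ x hpf.2
        | false => exact aux_pos s r p' Q hQ x hpf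

end DTree

open DTree in
/-- Let `ℓ' = s ++ true :: p'` and `ℓ = s ++ false :: p` be leaves of a decision tree
`T` with `ℓ'` lexicographically preceding `ℓ`, and let `n` be their lowest common
ancestor — the internal node at path `s`, carrying test `Q` (so `ℓ'` lies in the left
subtree of `n` and `ℓ` in its right subtree).  Then (a) the path to `ℓ` exits `n` via
its right child, so `¬ Q x` is one of the conjuncts of the path formula of `ℓ` (hence
the path formula of `ℓ` at `x` implies `¬ Q x`); and (b) for every `x`, if the positive
formula of `ℓ'` holds at `x` then `Q x` holds.  In particular, if the positive formula
of the lexicographically earlier leaf `ℓ'` holds at `x`, then the path formula of `ℓ`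
fails at `x`. -/
theorem earlier_leaf_positive_blocks_path_formula
    {α : Type*} (T : DTree α) (s p' p : List Bool) (Q : α → Prop)
    (hQ : testAt T s = some Q)
    (hℓ' : IsLeaf T (s ++ true :: p')) (hℓ : IsLeaf T (s ++ false :: p)) :
    (∀ x : α, pathFormula T (s ++ false :: p) x → ¬ Q x) ∧
    (∀ x : α, posFormula T (s ++ true :: p') x → Q x) ∧
    (∀ x : α, posFormula T (s ++ true :: p') x → ¬ pathFormula T (s ++ false :: p) x) := by
  exact ⟨aux_path s T p Q hQ, aux_pos s T p' Q hQ,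
    fun x hpos hpath => aux_path s T p Q hQ x hpath (aux_pos s T p' Q hQ x hpos)⟩
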